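/- The Pastro polynomials satisfy the three-term recurrence relation of Laurent biorthogonal type: for every positive integer n and all real x, P_{n+1}(x) + μ_n^{(1)} P_n(x) = x ( P_n(x) + μ_n^{(2)} P_{n-1}(x) ), where μ_n^{(1)} = -q(b - a q^n) / ( a (1 - b q^n) ) and μ_n^{(2)} = -b q (1 - q^n)(1 - a q^{n-1}) / ( a (1 - b q^n)(1 - b q^{n-1}) ). -/

import Mathlib

/-- The q-Pochhammer symbol `(z;q)_k = ∏_{j=0}^{k-1} (1 - z q^j)`. -/
noncomputable def qPoch (q z : ℝ) (k : ℕ) : ℝ :=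
  ∏ j ∈ Finset.range k, (1 - z * q ^ j)

/-- Coefficient `c_{n,k}` of the monic Pastro polynomial. -/
noncomputable def pastroCoeff (q a b : ℝ) (n k : ℕ) : ℝ :=
  (qPoch q (a⁻¹ * b * q ^ (1 - (n : ℤ))) n * qPoch q q n /
      (qPoch q (q ^ (-(n : ℤ))) n * qPoch q b n)) *
    (qPoch q (q ^ (-(n : ℤ))) k * qPoch q b k /
      (qPoch q (a⁻¹ * b * q ^ (1 - (n : ℤ))) k * qPoch q q k))

/-- The monic Pastro polynomial `P_n(x;a,b;q)`. -/
noncomputable def pastroP (q a b : ℝ) (n : ℕ) (x : ℝ) : ℝ :=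
  ∑ k ∈ Finset.range (n + 1), pastroCoeff q a b n k * x ^ k

/-! ### Basic lemmas about `qPoch` -/

lemma qPoch_succ (q z : ℝ) (k : ℕ) :
    qPoch q z (k + 1) = qPoch q z k * (1 - z * q ^ k) := Finset.prod_range_succ _ _

lemma qPoch_succ' (q z : ℝ) (hq : q ≠ 0) (k : ℕ) :
    qPoch q (z * q⁻¹) (k + 1) = qPoch q z k * (1 - z * q⁻¹) := by
  unfold qPoch
  rw [Finset.prod_range_succ']
  simp only [pow_zero, mul_one]
  congr 1
  apply Finset.prod_congr rfl
  intro j _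
  rw [pow_succ]
  field_simp

lemma qPoch_shift (q z : ℝ) (hq : q ≠ 0) (k : ℕ) :
    (1 - z * q⁻¹ * q ^ k) * qPoch q (z * q⁻¹) k = (1 - z * q⁻¹) * qPoch q z k := by
  have h1 := qPoch_succ q (z * q⁻¹) k
  have h2 := qPoch_succ' q z hq k
  rw [h2] at h1
  linear_combination -h1

lemma zpow_mul_pow {q : ℝ} (hq : q ≠ 0) (m : ℤ) (j : ℕ) :
    q ^ m * q ^ j = q ^ (m + j) := by
  rw [← zpow_natCast q j, ← zpow_add₀ hq]

lemma qPoch_q_ne {q : ℝ} (hq : q ≠ 0) (hq1 : ∀ k : ℤ, k ≠ 0 → q ^ k ≠ 1) (m : ℕ) :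
    qPoch q q m ≠ 0 := by
  unfold qPoch
  rw [Finset.prod_ne_zero_iff]
  intro j _
  rw [sub_ne_zero]
  have := hq1 (1 + j) (by omega)
  rw [← zpow_mul_pow hq 1 j, zpow_one] at this
  exact this.symm

lemma qPoch_b_ne {q b : ℝ} (hbq : ∀ m : ℤ, b * q ^ m ≠ 1) (m : ℕ) :
    qPoch q b m ≠ 0 := by
  unfold qPoch
  rw [Finset.prod_ne_zero_iff]
  intro j _
  rw [sub_ne_zero]
  have := hbq j
  rw [zpow_natCast] at this
  exact this.symm

lemma qPoch_ab_ne {q a b : ℝ} (hq : q ≠ 0) (habq : ∀ m : ℤ, a⁻¹ * b * q ^ m ≠ 1)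
    (m : ℤ) (k : ℕ) : qPoch q (a⁻¹ * b * q ^ m) k ≠ 0 := by
  unfold qPoch
  rw [Finset.prod_ne_zero_iff]
  intro j _
  rw [sub_ne_zero, mul_assoc, zpow_mul_pow hq]
  exact (habq _).symm

lemma qPoch_qpow_ne {q : ℝ} (hq : q ≠ 0) (hq1 : ∀ k : ℤ, k ≠ 0 → q ^ k ≠ 1)
    {m : ℕ} {n : ℤ} (h : ∀ j : ℕ, j < m → -n + j ≠ 0) :
    qPoch q (q ^ (-n)) m ≠ 0 := by
  unfold qPoch
  rw [Finset.prod_ne_zero_iff]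
  intro j hj
  rw [sub_ne_zero, zpow_mul_pow hq]
  exact (hq1 _ (h j (Finset.mem_range.mp hj))).symm

lemma qPoch_qpow_zero {q : ℝ} (hq : q ≠ 0) {n k : ℕ} (h : n < k) :
    qPoch q (q ^ (-(n : ℤ))) k = 0 := by
  unfold qPoch
  apply Finset.prod_eq_zero (Finset.mem_range.mpr h)
  rw [zpow_mul_pow hq]
  simp

lemma pastroCoeff_zero_of_lt {q a b : ℝ} (hq : q ≠ 0) {n k : ℕ} (h : n < k) :
    pastroCoeff q a b n k = 0 := by
  rw [pastroCoeff, qPoch_qpow_zero hq h]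
  simp

/-! ### Ratio in `k` -/

lemma aux_k (A W B Z Q α β γ δ : ℝ) (hZ : Z ≠ 0) (hQ : Q ≠ 0) (hγ : γ ≠ 0) (hδ : δ ≠ 0) :
    A * ((W * α) * (B * β) / ((Z * γ) * (Q * δ))) * (γ * δ) = A * (W * B / (Z * Q)) * (α * β) := by
  field_simp

lemma coeff_k {q a b : ℝ} (hq : q ≠ 0) (hq1 : ∀ k : ℤ, k ≠ 0 → q ^ k ≠ 1)
    (hbq : ∀ m : ℤ, b * q ^ m ≠ 1) (habq : ∀ m : ℤ, a⁻¹ * b * q ^ m ≠ 1)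
    (n k : ℕ) :
    pastroCoeff q a b n (k + 1) * ((1 - a⁻¹ * b * q ^ (1 - (n : ℤ) + k)) * (1 - q ^ (1 + (k : ℤ)))) =
      pastroCoeff q a b n k * ((1 - q ^ (-(n : ℤ) + k)) * (1 - b * q ^ (k : ℤ))) := by
  have e1 : (q : ℝ) ^ (-(n : ℤ)) * q ^ k = q ^ (-(n : ℤ) + k) := zpow_mul_pow hq _ _
  have e2 : a⁻¹ * b * q ^ (1 - (n : ℤ)) * q ^ k = a⁻¹ * b * q ^ (1 - (n : ℤ) + k) := by
    rw [mul_assoc, zpow_mul_pow hq]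
  have e3 : q * q ^ k = q ^ (1 + (k : ℤ)) := by
    rw [zpow_add₀ hq, zpow_one, zpow_natCast]
  have e4 : b * q ^ k = b * q ^ (k : ℤ) := by rw [zpow_natCast]
  have h4 : qPoch q (a⁻¹ * b * q ^ (1 - (n : ℤ))) k ≠ 0 := qPoch_ab_ne hq habq _ k
  have h5 : qPoch q q k ≠ 0 := qPoch_q_ne hq hq1 k
  have h6 : 1 - a⁻¹ * b * q ^ (1 - (n : ℤ) + k) ≠ 0 := sub_ne_zero.mpr (habq _).symm
  have h7 : 1 - q ^ (1 + (k : ℤ)) ≠ 0 := sub_ne_zero.mpr (hq1 _ (by omega)).symm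
  unfold pastroCoeff
  simp only [qPoch_succ, e1, e2, e3, e4]
  exact aux_k _ _ _ _ _ _ _ _ _ h4 h5 h6 h7

/-! ### Ratio in `n` -/

lemma aux_n (A1 A2 A3 A4 W B Z Qk L M d1 d2 e f : ℝ)
    (hA3 : A3 ≠ 0) (hA4 : A4 ≠ 0) (hM : M ≠ 0) (hL : L ≠ 0) (hf : f ≠ 0)
    (hZ : Z ≠ 0) (hQk : Qk ≠ 0) (hd1 : d1 ≠ 0) (hd2 : d2 ≠ 0) :
    (A1 * L * (A2 * e) / (A3 * M * (A4 * f))) * (M * W / d2 * B / (L * Z / d1 * Qk)) * (f * d2)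
      = A1 * A2 / (A3 * A4) * (W * B / (Z * Qk)) * (e * d1) := by
  field_simp

lemma coeff_n {q a b : ℝ} (hq : q ≠ 0) (hq1 : ∀ k : ℤ, k ≠ 0 → q ^ k ≠ 1)
    (hbq : ∀ m : ℤ, b * q ^ m ≠ 1) (habq : ∀ m : ℤ, a⁻¹ * b * q ^ m ≠ 1)
    (n k : ℕ) :
    pastroCoeff q a b (n + 1) k * ((1 - b * q ^ n) * (1 - q ^ (-1 - (n : ℤ) + k))) =
      pastroCoeff q a b n k * ((1 - q * q ^ n) * (1 - a⁻¹ * b * q ^ (-(n : ℤ) + k))) := by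
  have g1 : (1 : ℤ) - ((n : ℤ) + 1) = (1 - (n : ℤ)) + (-1) := by ring
  have g2 : (-((n : ℤ) + 1)) = (-(n : ℤ)) + (-1) := by ring
  have z1 : a⁻¹ * b * q ^ (1 - ((n : ℤ) + 1)) = a⁻¹ * b * q ^ (1 - (n : ℤ)) * q⁻¹ := by
    rw [g1, zpow_add₀ hq, zpow_neg_one, ← mul_assoc]
  have z2 : q ^ (-((n : ℤ) + 1)) = q ^ (-(n : ℤ)) * q⁻¹ := by
    rw [g2, zpow_add₀ hq, zpow_neg_one]
  have fgen : ∀ A B C : ℤ, A = B + (-1) + C → q ^ A = q ^ B * q⁻¹ * q ^ C := by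
    intro A B C h
    rw [h, zpow_add₀ hq, zpow_add₀ hq, zpow_neg_one]
  have f1 : q ^ (-1 - (n : ℤ) + (k : ℤ)) = q ^ (-(n : ℤ)) * q⁻¹ * q ^ k := by
    rw [fgen _ (-(n:ℤ)) (k:ℤ) (by ring), zpow_natCast]
  have f2 : a⁻¹ * b * q ^ (-(n : ℤ) + (k : ℤ)) = a⁻¹ * b * q ^ (1 - (n : ℤ)) * q⁻¹ * q ^ k := by
    rw [fgen _ (1 - (n:ℤ)) (k:ℤ) (by ring), zpow_natCast]
    ring
  unfold pastroCoeff
  push_cast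
  rw [z1, z2, qPoch_succ' q (a⁻¹ * b * q ^ (1 - (n : ℤ))) hq n,
    qPoch_succ' q (q ^ (-(n : ℤ))) hq n, qPoch_succ q q n, qPoch_succ q b n, f1, f2]
  by_cases hc : (1 : ℝ) - q ^ (-(n : ℤ)) * q⁻¹ * q ^ k = 0
  · have hk : -(n : ℤ) - 1 + (k : ℤ) = 0 := by
      by_contra h
      apply hq1 _ h
      have h2 : q ^ (-(n : ℤ)) * q⁻¹ * q ^ k = 1 := by linarith [hc]
      rw [fgen _ (-(n:ℤ)) (k:ℤ) (by ring), zpow_natCast]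
      exact h2
    have hk' : n < k := by omega
    rw [hc, qPoch_qpow_zero hq hk']
    simp
  · have hd1 : (1 : ℝ) - a⁻¹ * b * q ^ (1 - (n : ℤ)) * q⁻¹ * q ^ k ≠ 0 := by
      rw [← f2]
      exact sub_ne_zero.mpr (habq _).symm
    have W'eq : qPoch q (q ^ (-(n : ℤ)) * q⁻¹) k =
        (1 - q ^ (-(n : ℤ)) * q⁻¹) * qPoch q (q ^ (-(n : ℤ))) k /
          (1 - q ^ (-(n : ℤ)) * q⁻¹ * q ^ k) := by
      rw [eq_div_iff hc]
      linear_combination qPoch_shift q (q ^ (-(n : ℤ))) hq k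
    have Z'eq : qPoch q (a⁻¹ * b * q ^ (1 - (n : ℤ)) * q⁻¹) k =
        (1 - a⁻¹ * b * q ^ (1 - (n : ℤ)) * q⁻¹) * qPoch q (a⁻¹ * b * q ^ (1 - (n : ℤ))) k /
          (1 - a⁻¹ * b * q ^ (1 - (n : ℤ)) * q⁻¹ * q ^ k) := by
      rw [eq_div_iff hd1]
      linear_combination qPoch_shift q (a⁻¹ * b * q ^ (1 - (n : ℤ))) hq k
    rw [W'eq, Z'eq]
    have hM : (1 : ℝ) - q ^ (-(n : ℤ)) * q⁻¹ ≠ 0 := by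
      rw [← zpow_neg_one q, ← zpow_add₀ hq]
      exact sub_ne_zero.mpr (hq1 (-(n : ℤ) + -1) (by omega)).symm
    have hL : (1 : ℝ) - a⁻¹ * b * q ^ (1 - (n : ℤ)) * q⁻¹ ≠ 0 := by
      rw [mul_assoc, ← zpow_neg_one q, ← zpow_add₀ hq]
      exact sub_ne_zero.mpr (habq _).symm
    have hf : (1 : ℝ) - b * q ^ n ≠ 0 := by
      rw [← zpow_natCast q n]
      exact sub_ne_zero.mpr (hbq _).symm
    exact aux_n _ _ _ _ _ _ _ _ _ _ _ _ _ _
      (qPoch_qpow_ne hq hq1 (fun j hj => by omega)) (qPoch_b_ne hbq n) hM hL hf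
      (qPoch_ab_ne hq habq _ k) (qPoch_q_ne hq hq1 k) hd1 hc

/-! ### Polynomial (inverse-free) forms of the two ratio relations -/

lemma absorb_ab {q a b : ℝ} (hq : q ≠ 0) (ha : a ≠ 0) (e : ℤ) (i j : ℕ) (h : e + i = j) :
    (1 - a⁻¹ * b * q ^ e) * (a * q ^ i) = a * q ^ i - b * q ^ j := by
  have t : q ^ e * q ^ i = q ^ j := by
    rw [zpow_mul_pow hq, show e + (i : ℤ) = ((j : ℕ) : ℤ) by omega, zpow_natCast]
  rw [sub_mul, one_mul]
  congr 1
  calc a⁻¹ * b * q ^ e * (a * q ^ i) = b * (q ^ e * q ^ i) * (a⁻¹ * a) := by ring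
    _ = b * q ^ j := by rw [t, inv_mul_cancel₀ ha, mul_one]

lemma absorb_q {q : ℝ} (hq : q ≠ 0) (e : ℤ) (i j : ℕ) (h : e + i = j) :
    (1 - q ^ e) * (q ^ i : ℝ) = q ^ i - q ^ j := by
  have t : q ^ e * q ^ i = q ^ j := by
    rw [zpow_mul_pow hq, show e + (i : ℤ) = ((j : ℕ) : ℤ) by omega, zpow_natCast]
  rw [sub_mul, one_mul, t]

lemma coeff_k' {q a b : ℝ} (hq : q ≠ 0) (hq1 : ∀ k : ℤ, k ≠ 0 → q ^ k ≠ 1)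
    (ha : a ≠ 0) (hbq : ∀ m : ℤ, b * q ^ m ≠ 1) (habq : ∀ m : ℤ, a⁻¹ * b * q ^ m ≠ 1)
    (n k : ℕ) :
    pastroCoeff q a b n (k + 1) * ((a * q ^ n - b * q ^ (k + 1)) * (1 - q ^ (k + 1))) =
      pastroCoeff q a b n k * ((q ^ n - q ^ k) * (1 - b * q ^ k)) * a := by
  have h := coeff_k hq hq1 hbq habq n k
  rw [← absorb_ab hq ha (1 - (n : ℤ) + k) n (k + 1) (by omega),
    ← absorb_q hq (-(n : ℤ) + k) n k (by omega),
    show (1 : ℝ) - q ^ (k + 1) = 1 - q ^ (1 + (k : ℤ)) by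
      rw [show (1 + (k : ℤ)) = ((k + 1 : ℕ) : ℤ) by omega, zpow_natCast],
    show (1 : ℝ) - b * q ^ k = 1 - b * q ^ ((k : ℤ)) by rw [zpow_natCast]]
  linear_combination (a * q ^ n) * h

lemma coeff_n' {q a b : ℝ} (hq : q ≠ 0) (hq1 : ∀ k : ℤ, k ≠ 0 → q ^ k ≠ 1)
    (ha : a ≠ 0) (hbq : ∀ m : ℤ, b * q ^ m ≠ 1) (habq : ∀ m : ℤ, a⁻¹ * b * q ^ m ≠ 1)
    (n k : ℕ) :
    pastroCoeff q a b (n + 1) k * ((1 - b * q ^ n) * (q ^ (n + 1) - q ^ k)) * a =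
      pastroCoeff q a b n k * ((1 - q ^ (n + 1)) * (a * q ^ (n + 1) - b * q ^ (k + 1))) := by
  have h := coeff_n hq hq1 hbq habq n k
  rw [← absorb_q hq (-1 - (n : ℤ) + k) (n + 1) k (by omega),
    ← absorb_ab hq ha (-(n : ℤ) + k) (n + 1) (k + 1) (by omega),
    show (1 : ℝ) - q ^ (n + 1) = 1 - q * q ^ n by rw [pow_succ, mul_comm (q ^ n) q]]
  linear_combination (a * q ^ (n + 1)) * h

lemma hab' {q a b : ℝ} (hq : q ≠ 0) (ha : a ≠ 0)
    (habq : ∀ m : ℤ, a⁻¹ * b * q ^ m ≠ 1) (i j : ℕ) : a * q ^ i - b * q ^ j ≠ 0 := by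
  intro h0
  have heq : a * q ^ i = b * q ^ j := by linarith
  apply habq ((j : ℤ) - i)
  have hqi : (q : ℝ) ^ i ≠ 0 := pow_ne_zero _ hq
  have t : q ^ ((j : ℤ) - i) * q ^ i = q ^ j := by
    rw [zpow_mul_pow hq, show (j : ℤ) - i + i = ((j : ℕ) : ℤ) by omega, zpow_natCast]
  apply mul_right_cancel₀ (mul_ne_zero ha hqi)
  calc a⁻¹ * b * q ^ ((j : ℤ) - i) * (a * q ^ i)
      = b * (q ^ ((j : ℤ) - i) * q ^ i) * (a⁻¹ * a) := by ring
    _ = b * q ^ j := by rw [t, inv_mul_cancel₀ ha, mul_one]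
    _ = 1 * (a * q ^ i) := by rw [one_mul, heq]

/-! ### The two key coefficient identities -/

lemma key0 {q a b : ℝ} (hq : q ≠ 0) (hq1 : ∀ k : ℤ, k ≠ 0 → q ^ k ≠ 1)
    (ha : a ≠ 0) (hb : b ≠ 0)
    (hbq : ∀ m : ℤ, b * q ^ m ≠ 1) (habq : ∀ m : ℤ, a⁻¹ * b * q ^ m ≠ 1) (p : ℕ) :
    pastroCoeff q a b (p + 1 + 1) 0 +
      (-(q * (b - a * q ^ (p + 1))) / (a * (1 - b * q ^ (p + 1)))) *
        pastroCoeff q a b (p + 1) 0 = 0 := by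
  have h := coeff_n hq hq1 hbq habq (p + 1) 0
  have c1 : q ^ (-1 - ((p + 1 : ℕ) : ℤ) + ((0 : ℕ) : ℤ)) = (q ^ (p + 1) * q)⁻¹ := by
    rw [show (-1 - ((p + 1 : ℕ) : ℤ) + ((0 : ℕ) : ℤ)) = -(((p + 1 + 1 : ℕ) : ℤ)) by push_cast; ring,
      zpow_neg, zpow_natCast]
    ring_nf
  have c2 : q ^ (-((p + 1 : ℕ) : ℤ) + ((0 : ℕ) : ℤ)) = (q ^ (p + 1))⁻¹ := by
    rw [show (-((p + 1 : ℕ) : ℤ) + ((0 : ℕ) : ℤ)) = -(((p + 1 : ℕ) : ℤ)) by push_cast; ring,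
      zpow_neg, zpow_natCast]
  rw [c1, c2] at h
  have hT : (q : ℝ) ^ (p + 1) ≠ 0 := pow_ne_zero _ hq
  have hd1 : (1 : ℝ) - b * q ^ (p + 1) ≠ 0 := by
    rw [← zpow_natCast q (p + 1)]
    exact sub_ne_zero.mpr (hbq _).symm
  have hd2' : (q : ℝ) ^ (p + 1) * q - 1 ≠ 0 := by
    rw [sub_ne_zero, show (q:ℝ)^(p+1)*q = q ^ (((p+1+1:ℕ):ℤ)) by rw [zpow_natCast]; ring]
    exact hq1 _ (by omega)
  have expand := congrArg (fun t : ℝ => t * (q ^ (p + 1) * q * a)) h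
  field_simp at expand
  rw [neg_div, neg_mul, add_neg_eq_zero, div_mul_eq_mul_div,
    eq_div_iff (mul_ne_zero ha hd1), ← sub_eq_zero]
  have hfac : ((q ^ (p + 1) : ℝ) ^ 2 * q * a * (q ^ (p + 1) * q - 1)) ≠ 0 :=
    mul_ne_zero (mul_ne_zero (mul_ne_zero (pow_ne_zero _ hT) hq) ha) hd2'
  have h2 : (pastroCoeff q a b (p + 1 + 1) 0 * (a * (1 - b * q ^ (p + 1))) -
      q * (b - a * q ^ (p + 1)) * pastroCoeff q a b (p + 1) 0) *
      ((q ^ (p + 1)) ^ 2 * q * a * (q ^ (p + 1) * q - 1)) = 0 := by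
    linear_combination (q ^ (p + 1)) ^ 2 * q * a * expand
  exact (mul_eq_zero.mp h2).resolve_right hfac

set_option maxHeartbeats 4000000 in
lemma keyS {q a b : ℝ} (hq : q ≠ 0) (hq1 : ∀ k : ℤ, k ≠ 0 → q ^ k ≠ 1)
    (ha : a ≠ 0) (hb : b ≠ 0)
    (hbq : ∀ m : ℤ, b * q ^ m ≠ 1) (habq : ∀ m : ℤ, a⁻¹ * b * q ^ m ≠ 1) (p m : ℕ) :
    pastroCoeff q a b (p + 1 + 1) (m + 1) +
      (-(q * (b - a * q ^ (p + 1))) / (a * (1 - b * q ^ (p + 1)))) *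
        pastroCoeff q a b (p + 1) (m + 1) =
      pastroCoeff q a b (p + 1) m +
        (-(b * q * (1 - q ^ (p + 1)) * (1 - a * q ^ p)) /
            (a * (1 - b * q ^ (p + 1)) * (1 - b * q ^ p))) * pastroCoeff q a b p m := by
  have hk1 := coeff_k' hq hq1 ha hbq habq (p + 1 + 1) m
  have hn1 := coeff_n' hq hq1 ha hbq habq (p + 1) (m + 1)
  have hn2 := coeff_n' hq hq1 ha hbq habq (p + 1) m
  have hn3 := coeff_n' hq hq1 ha hbq habq p m
  have hqnat : ∀ j : ℕ, 0 < j → (1 : ℝ) - q ^ j ≠ 0 := by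
    intro j hj
    rw [← zpow_natCast q j]
    exact sub_ne_zero.mpr (hq1 _ (by omega)).symm
  have hbnat : ∀ j : ℕ, (1 : ℝ) - b * q ^ j ≠ 0 := by
    intro j
    rw [← zpow_natCast q j]
    exact sub_ne_zero.mpr (hbq _).symm
  have hg1 := hab' hq ha habq (p + 1 + 1) (m + 1)
  have hg2 := hab' hq ha habq (p + 1 + 1) (m + 1 + 1)
  have hg3 := hab' hq ha habq (p + 1) (m + 1)
  have hq1' := hqnat (m + 1) (by omega)
  have hq2' := hqnat (p + 1 + 1) (by omega)
  have hq3' := hqnat (p + 1) (by omega)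
  have hb1 := hbnat (p + 1)
  have hb2 := hbnat p
  have hb3 := hbnat m
  have e1 : pastroCoeff q a b (p + 1 + 1) (m + 1) =
      pastroCoeff q a b (p + 1 + 1) m * ((q ^ (p + 1 + 1) - q ^ m) * (1 - b * q ^ m)) * a /
        ((a * q ^ (p + 1 + 1) - b * q ^ (m + 1)) * (1 - q ^ (m + 1))) := by
    rw [eq_div_iff (mul_ne_zero hg1 hq1')]
    linear_combination hk1
  have e2 : pastroCoeff q a b (p + 1) (m + 1) =
      pastroCoeff q a b (p + 1 + 1) (m + 1) *
        ((1 - b * q ^ (p + 1)) * (q ^ (p + 1 + 1) - q ^ (m + 1))) * a /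
        ((1 - q ^ (p + 1 + 1)) * (a * q ^ (p + 1 + 1) - b * q ^ (m + 1 + 1))) := by
    rw [eq_div_iff (mul_ne_zero hq2' hg2)]
    linear_combination -hn1
  have e3 : pastroCoeff q a b (p + 1) m =
      pastroCoeff q a b (p + 1 + 1) m *
        ((1 - b * q ^ (p + 1)) * (q ^ (p + 1 + 1) - q ^ m)) * a /
        ((1 - q ^ (p + 1 + 1)) * (a * q ^ (p + 1 + 1) - b * q ^ (m + 1))) := by
    rw [eq_div_iff (mul_ne_zero hq2' hg1)]
    linear_combination -hn2
  have e4 : pastroCoeff q a b p m =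
      pastroCoeff q a b (p + 1) m *
        ((1 - b * q ^ p) * (q ^ (p + 1) - q ^ m)) * a /
        ((1 - q ^ (p + 1)) * (a * q ^ (p + 1) - b * q ^ (m + 1))) := by
    rw [eq_div_iff (mul_ne_zero hq3' hg3)]
    linear_combination -hn3
  rw [e1] at e2
  rw [e3] at e4
  rw [e1, e2, e3, e4]
  simp only [pow_succ] at *
  generalize q ^ p = T at *
  generalize q ^ m = S at *
  have hx1 : T * a - S * b ≠ 0 := by
    intro h; apply hg3; linear_combination q * h
  have hx2 : 1 - T * q ^ 2 ≠ 0 := by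
    intro h; apply hq2'; linear_combination h
  have hx3 : 1 - T * q * b ≠ 0 := by
    intro h; apply hb1; linear_combination h
  have hx4 : 1 - T * b ≠ 0 := by
    intro h; apply hb2; linear_combination h
  have hx5 : T * q * a - S * b ≠ 0 := by
    intro h; apply hg1; linear_combination q * h
  have hx6 : 1 - q * S ≠ 0 := by
    intro h; apply hq1'; linear_combination h
  field_simp
  ring

/-- The Pastro polynomials satisfy the three-term recurrence relation of
Laurent biorthogonal type. -/
theorem pastro_recurrence (q a b : ℝ) (hq : q ≠ 0) (hq1 : ∀ k : ℤ, k ≠ 0 → q ^ k ≠ 1)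
    (ha : a ≠ 0) (hb : b ≠ 0)
    (hbq : ∀ m : ℤ, b * q ^ m ≠ 1) (habq : ∀ m : ℤ, a⁻¹ * b * q ^ m ≠ 1)
    (n : ℕ) (hn : 0 < n) (x : ℝ) :
    pastroP q a b (n + 1) x +
        (-(q * (b - a * q ^ n)) / (a * (1 - b * q ^ n))) * pastroP q a b n x =
      x * (pastroP q a b n x +
        (-(b * q * (1 - q ^ n) * (1 - a * q ^ ((n : ℤ) - 1))) /
            (a * (1 - b * q ^ n) * (1 - b * q ^ ((n : ℤ) - 1)))) * pastroP q a b (n - 1) x) := by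
  have hz : ((n : ℤ) - 1) = ((n - 1 : ℕ) : ℤ) := by omega
  rw [hz, zpow_natCast]
  obtain ⟨p, rfl⟩ : ∃ p, n = p + 1 := ⟨n - 1, by omega⟩
  simp only [Nat.add_sub_cancel]
  set μ1 := -(q * (b - a * q ^ (p + 1))) / (a * (1 - b * q ^ (p + 1))) with hμ1
  set μ2 := -(b * q * (1 - q ^ (p + 1)) * (1 - a * q ^ p)) /
      (a * (1 - b * q ^ (p + 1)) * (1 - b * q ^ p)) with hμ2
  unfold pastroP
  have hpad1 : ∑ k ∈ Finset.range (p + 1 + 1), pastroCoeff q a b (p + 1) k * x ^ k =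
      ∑ k ∈ Finset.range (p + 1 + 1 + 1), pastroCoeff q a b (p + 1) k * x ^ k := by
    rw [Finset.sum_range_succ (n := p + 1 + 1), pastroCoeff_zero_of_lt hq (by omega), zero_mul,
      add_zero]
  have hpad2 : ∑ k ∈ Finset.range (p + 1), pastroCoeff q a b p k * x ^ k =
      ∑ k ∈ Finset.range (p + 1 + 1), pastroCoeff q a b p k * x ^ k := by
    rw [Finset.sum_range_succ (n := p + 1), pastroCoeff_zero_of_lt hq (by omega), zero_mul,
      add_zero]
  rw [hpad1, hpad2]
  have lhs_eq : ∑ k ∈ Finset.range (p + 1 + 1 + 1), pastroCoeff q a b (p + 1 + 1) k * x ^ k +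
      μ1 * ∑ k ∈ Finset.range (p + 1 + 1 + 1), pastroCoeff q a b (p + 1) k * x ^ k =
      ∑ k ∈ Finset.range (p + 1 + 1 + 1),
        (pastroCoeff q a b (p + 1 + 1) k + μ1 * pastroCoeff q a b (p + 1) k) * x ^ k := by
    rw [Finset.mul_sum, ← Finset.sum_add_distrib]
    exact Finset.sum_congr rfl fun k _ => by ring
  have rhs_eq : x * (∑ k ∈ Finset.range (p + 1 + 1 + 1), pastroCoeff q a b (p + 1) k * x ^ k +
      μ2 * ∑ k ∈ Finset.range (p + 1 + 1), pastroCoeff q a b p k * x ^ k) =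
      ∑ k ∈ Finset.range (p + 1 + 1),
        (pastroCoeff q a b (p + 1) k + μ2 * pastroCoeff q a b p k) * x ^ (k + 1) := by
    rw [← hpad1, Finset.mul_sum, ← Finset.sum_add_distrib, Finset.mul_sum]
    exact Finset.sum_congr rfl fun k _ => by ring
  rw [lhs_eq, rhs_eq, Finset.sum_range_succ']
  have h0 : (pastroCoeff q a b (p + 1 + 1) 0 + μ1 * pastroCoeff q a b (p + 1) 0) * x ^ 0 = 0 := by
    rw [key0 hq hq1 ha hb hbq habq p, zero_mul]
  rw [h0, add_zero]
  exact Finset.sum_congr rfl fun k _ => by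
    rw [keyS hq hq1 ha hb hbq habq p k]
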